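/- arXiv:1511.04010 — 3 statements merged into one kernel-verified Lean document; each statement's English description precedes it below -/
import Mathlib

section
/- Let p ∈ ℂ with Im(p) ≠ 0 and define A(q,p)² = (ℏ/(5−q))·(√(2(q+1))/|p|)·₂F₁(1/2, (5−q)/(2(q−1)); (3+q)/(2(q−1)); Re(p)²/|p|²) for q ∈ (1,5). Then lim_{q→1⁺} A(q,p)² = ℏ/(2|Im(p)|). -/
open Complex Filter

/-- The Gauss hypergeometric function ₂F₁ as a power series. -/
noncomputable def hyp2F1 (a b c x : ℂ) : ℂ :=
  ∑' n : ℕ, (ascPochhammer ℂ n).eval a * (ascPochhammer ℂ n).eval b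
    / ((ascPochhammer ℂ n).eval c * (n.factorial : ℂ)) * x ^ n

/-- The squared norm `A(q,p)²` of the q-Gamow state. -/
noncomputable def Asq (ℏ : ℝ) (q : ℝ) (p : ℂ) : ℂ :=
  ((ℏ / (5 - q) : ℝ) : ℂ) * ((Real.sqrt (2 * (q + 1)) / ‖p‖ : ℝ) : ℂ) *
    hyp2F1 (1 / 2) (((5 - q) / (2 * (q - 1)) : ℝ) : ℂ) (((3 + q) / (2 * (q - 1)) : ℝ) : ℂ)
      ((p.re ^ 2 / ‖p‖ ^ 2 : ℝ) : ℂ)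



open Filter

noncomputable def cc (n : ℕ) : ℝ := (ascPochhammer ℝ n).eval (1/2) / n.factorial

lemma asc_pos {x : ℝ} (hx : 0 < x) (n : ℕ) : 0 < (ascPochhammer ℝ n).eval x := by
  induction n with
  | zero => simp
  | succ n ih => rw [ascPochhammer_succ_eval]; positivity

lemma cc_zero : cc 0 = 1 := by simp [cc]

lemma cc_succ (n : ℕ) : cc (n+1) = cc n * ((2*n+1)/(2*n+2)) := by
  rw [cc, cc, ascPochhammer_succ_eval, Nat.factorial_succ]
  push_cast
  field_simp
  ring

lemma cc_pos (n : ℕ) : 0 < cc n := by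
  have := asc_pos (x := (1/2:ℝ)) (by norm_num) n
  have : (0:ℝ) < n.factorial := by positivity
  exact div_pos (asc_pos (by norm_num) n) this

lemma cc_le_one (n : ℕ) : cc n ≤ 1 := by
  induction n with
  | zero => simp [cc_zero]
  | succ n ih =>
    rw [cc_succ]
    have h1 : (2*(n:ℝ)+1)/(2*n+2) ≤ 1 := by
      rw [div_le_one (by positivity)]; linarith
    calc cc n * ((2*(n:ℝ)+1)/(2*n+2)) ≤ 1 * 1 := by
          apply mul_le_mul ih h1 (by positivity) one_pos.le
      _ = 1 := one_mul 1

lemma two_succ_cc (n : ℕ) : 2 * ((n:ℝ)+1) * cc (n+1) = (2*n+1) * cc n := by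
  rw [cc_succ]
  have : (2*(n:ℝ)+2) ≠ 0 := by positivity
  field_simp

open Filter
noncomputable def SS (t : ℝ) : ℝ := ∑' n, cc n * t ^ n

lemma summable_base {t : ℝ} (ht : |t| < 1) : Summable (fun n => cc n * t ^ n) := by
  apply Summable.of_norm
  apply (summable_geometric_of_lt_one (_root_.abs_nonneg t) ht).of_nonneg_of_le (fun n => norm_nonneg _)
  intro n
  rw [norm_mul, norm_pow, Real.norm_eq_abs, Real.norm_eq_abs,
    _root_.abs_of_pos (cc_pos n)]
  calc cc n * |t|^n ≤ 1 * |t|^n := by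
        apply mul_le_mul_of_nonneg_right (cc_le_one n) (by positivity)
    _ = |t|^n := one_mul _

lemma summable_deriv_bound {r : ℝ} (hr0 : 0 ≤ r) (hr : r < 1) :
    Summable (fun n : ℕ => (n:ℝ) * r ^ (n-1)) := by
  have h : Summable (fun n : ℕ => ((n:ℝ)+1) * r ^ n) := by
    have h1 := summable_pow_mul_geometric_of_norm_lt_one (R := ℝ) 1 (r := r)
      (by rwa [Real.norm_eq_abs, _root_.abs_of_nonneg hr0])
    have h2 := summable_geometric_of_lt_one hr0 hr
    simpa [add_mul, pow_one] using h1.add h2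
  exact (summable_nat_add_iff 1).mp (by simpa using h)

lemma SS_hasDerivAt {y : ℝ} (hy : |y| < 1) :
    HasDerivAt SS (∑' n, cc n * ((n:ℝ) * y ^ (n-1))) y := by
  obtain ⟨r, hr1, hr2⟩ := exists_between hy
  have hr0 : 0 ≤ r := le_trans (_root_.abs_nonneg y) hr1.le
  apply hasDerivAt_tsum_of_isPreconnected
    (u := fun n : ℕ => (n:ℝ) * r ^ (n-1))
    (summable_deriv_bound hr0 hr2)
    (isOpen_Ioo (a := -r) (b := r))
    (Convex.isPreconnected (convex_Ioo _ _))
    (g := fun n z => cc n * z ^ n)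
    (g' := fun n z => cc n * ((n:ℝ) * z ^ (n-1)))
    (fun n z _ => (hasDerivAt_pow n z).const_mul (cc n))
    ?_ (y₀ := 0) ?_ ?_ ?_
  · intro n z hz
    rw [Real.norm_eq_abs, _root_.abs_mul, _root_.abs_mul, _root_.abs_of_pos (cc_pos n), _root_.abs_of_nonneg (by positivity : (0:ℝ) ≤ (n:ℝ))]
    have hz' : |z| ≤ r := by
      rw [_root_.abs_le]; exact ⟨(Set.mem_Ioo.mp hz).1.le, (Set.mem_Ioo.mp hz).2.le⟩
    have : |z ^ (n-1)| ≤ r ^ (n-1) := by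
      rw [_root_.abs_pow]; exact pow_le_pow_left₀ (_root_.abs_nonneg z) hz' _
    calc cc n * ((n:ℝ) * |z ^ (n-1)|) ≤ 1 * ((n:ℝ) * r ^ (n-1)) := by
          apply mul_le_mul (cc_le_one n) (by
            exact mul_le_mul_of_nonneg_left this (Nat.cast_nonneg n)) (by positivity) one_pos.le
      _ = (n:ℝ) * r ^ (n-1) := one_mul _
  · exact Set.mem_Ioo.mpr ⟨by linarith [_root_.abs_nonneg y], by linarith [_root_.abs_nonneg y]⟩
  · exact summable_base (by norm_num)
  · exact Set.mem_Ioo.mpr (_root_.abs_lt.mp hr1)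

open Filter
lemma summable_D {y : ℝ} (hy : |y| < 1) : Summable (fun n : ℕ => cc n * ((n:ℝ) * y ^ (n-1))) := by
  apply Summable.of_norm
  apply (summable_deriv_bound (_root_.abs_nonneg y) hy).of_nonneg_of_le (fun n => norm_nonneg _)
  intro n
  rw [Real.norm_eq_abs, _root_.abs_mul, _root_.abs_mul, _root_.abs_of_pos (cc_pos n), Nat.abs_cast, _root_.abs_pow]
  calc cc n * ((n:ℝ) * |y|^(n-1)) ≤ 1 * ((n:ℝ) * |y|^(n-1)) :=
        mul_le_mul_of_nonneg_right (cc_le_one n) (by positivity)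
    _ = _ := one_mul _

lemma summable_lin {y : ℝ} (hy : |y| < 1) (a b : ℝ) :
    Summable (fun n : ℕ => (a * n + b) * cc n * y ^ n) := by
  have h1 : Summable (fun n : ℕ => (n:ℝ) * |y| ^ n) := by
    simpa using summable_pow_mul_geometric_of_norm_lt_one (R := ℝ) 1
      (r := |y|) (by rwa [Real.norm_eq_abs, _root_.abs_abs])
  have h2 := summable_geometric_of_lt_one (_root_.abs_nonneg y) hy
  apply Summable.of_norm
  apply Summable.of_nonneg_of_le (fun n => norm_nonneg _) _ (((h1.mul_left |a|).add (h2.mul_left |b|)))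
  intro n
  rw [Real.norm_eq_abs, _root_.abs_mul, _root_.abs_mul, _root_.abs_of_pos (cc_pos n), _root_.abs_pow]
  have h3 : |a * n + b| ≤ |a| * n + |b| := by
    calc |a * (n:ℝ) + b| ≤ |a * n| + |b| := abs_add_le _ _
      _ = |a| * n + |b| := by rw [_root_.abs_mul, Nat.abs_cast]
  calc |a * (n:ℝ) + b| * cc n * |y|^n ≤ (|a| * n + |b|) * 1 * |y|^n := by
        apply mul_le_mul_of_nonneg_right _ (by positivity)
        exact mul_le_mul h3 (cc_le_one n) (cc_pos n).le (by positivity)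
    _ = |a| * ((n:ℝ) * |y|^n) + |b| * |y|^n := by ring

lemma key_ode {y : ℝ} (hy : |y| < 1) :
    2 * (1 - y) * (∑' n, cc n * ((n:ℝ) * y ^ (n-1))) = SS y := by
  have hD := summable_D hy
  -- shift
  have hshift : (∑' n, cc n * ((n:ℝ) * y ^ (n-1)))
      = ∑' n : ℕ, cc (n+1) * (((n:ℝ)+1) * y ^ n) := by
    rw [hD.tsum_eq_zero_add]
    push_cast
    simp
  have h2T : 2 * (∑' n, cc n * ((n:ℝ) * y ^ (n-1))) = ∑' n : ℕ, (2*(n:ℝ)+1) * cc n * y ^ n := by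
    rw [hshift, ← tsum_mul_left]
    congr 1; funext n
    linear_combination y ^ n * two_succ_cc n
  have h2yT : 2 * y * (∑' n, cc n * ((n:ℝ) * y ^ (n-1))) = ∑' n : ℕ, (2*(n:ℝ)+0) * cc n * y ^ n := by
    rw [← tsum_mul_left]
    congr 1; funext n
    rcases n with _ | m
    · simp
    · push_cast; ring
  have : 2 * (1-y) * (∑' n, cc n * ((n:ℝ) * y ^ (n-1)))
      = (∑' n : ℕ, (2*(n:ℝ)+1) * cc n * y ^ n) - ∑' n : ℕ, (2*(n:ℝ)+0) * cc n * y ^ n := by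
    rw [← h2T, ← h2yT]; ring
  rw [this, ← Summable.tsum_sub (summable_lin hy 2 1) (summable_lin hy 2 0)]
  unfold SS
  congr 1; funext n; ring

open Filter
lemma h_hasDerivAt {y : ℝ} (hy : |y| < 1) :
    HasDerivAt (fun z => (1 - z) * SS z ^ 2) 0 y := by
  have hS := SS_hasDerivAt hy
  set T := ∑' n, cc n * ((n:ℝ) * y ^ (n-1)) with hT
  have h1 : HasDerivAt (fun z : ℝ => 1 - z) (-1) y := by
    simpa using (hasDerivAt_id y).const_sub 1
  have h2 := h1.mul (hS.pow 2)
  refine h2.congr_deriv (Eq.symm ?_)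
  have hk := key_ode hy
  show (0:ℝ) = -1 * SS y ^ 2 + (1 - y) * (2 * SS y ^ (2-1) * T)
  norm_num
  linear_combination (- SS y) * key_ode hy

open Complex Filter
lemma SS_zero : SS 0 = 1 := by
  unfold SS
  rw [tsum_eq_single 0 (by intro n hn; simp [zero_pow hn])]
  simpa using cc_zero

lemma SS_sq {t : ℝ} (h0 : 0 ≤ t) (h1 : t < 1) : (1 - t) * SS t ^ 2 = 1 := by
  have habs : ∀ x ∈ Set.Icc (0:ℝ) t, |x| < 1 := by
    intro x hx
    rw [_root_.abs_lt]
    constructor <;> [linarith [hx.1]; linarith [hx.2]]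
  have hconst := constant_of_has_deriv_right_zero
    (f := fun z => (1 - z) * SS z ^ 2) (a := 0) (b := t)
    (fun x hx => ((h_hasDerivAt (habs x hx)).continuousAt).continuousWithinAt)
    (fun x hx => (h_hasDerivAt (habs x ⟨hx.1, hx.2.le⟩)).hasDerivWithinAt)
  have h := hconst t (Set.mem_Icc.mpr ⟨h0, le_refl t⟩)
  simp only [SS_zero] at h
  rw [h]; norm_num

lemma SS_ge_one {t : ℝ} (h0 : 0 ≤ t) (h1 : t < 1) : 1 ≤ SS t := by
  have hs := summable_base (t := t) (by rw [_root_.abs_of_nonneg h0]; exact h1)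
  have := hs.le_tsum 0 (fun n _ => mul_nonneg (cc_pos n).le (pow_nonneg h0 n))
  simpa [SS, cc_zero] using this

lemma asc_cast (n : ℕ) (x : ℝ) :
    (ascPochhammer ℂ n).eval ((x:ℝ) : ℂ) = (((ascPochhammer ℝ n).eval x : ℝ) : ℂ) := by
  induction n with
  | zero => simp
  | succ n ih => rw [ascPochhammer_succ_eval, ascPochhammer_succ_eval, ih]; push_cast; ring

lemma asc_ratio (n : ℕ) (b : ℝ) :
    (ascPochhammer ℝ n).eval b * (b + n) = b * (ascPochhammer ℝ n).eval (b + 1) := by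
  induction n with
  | zero => simp
  | succ n ih =>
    rw [ascPochhammer_succ_eval, ascPochhammer_succ_eval]
    push_cast
    linear_combination (b + (n:ℝ) + 1) * ih

lemma hyp_real {b t : ℝ} (hb : 0 < b) :
    hyp2F1 (1/2) (b : ℂ) ((b + 1 : ℝ) : ℂ) ((t : ℝ) : ℂ)
      = ((∑' n : ℕ, cc n * (b / (b + n)) * t ^ n : ℝ) : ℂ) := by
  unfold hyp2F1
  rw [Complex.ofReal_tsum]
  congr 1; funext n
  have h1 : ((1:ℂ)/2) = (((1:ℝ)/2 : ℝ) : ℂ) := by push_cast; ring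
  rw [h1, asc_cast, asc_cast, asc_cast]
  have hbn : (0:ℝ) < b + n := by positivity
  have hb1 : (0:ℝ) < (ascPochhammer ℝ n).eval (b+1) := asc_pos (by linarith) n
  have hfac : (0:ℝ) < (n.factorial : ℝ) := by positivity
  have hre : (ascPochhammer ℝ n).eval (1/2) * (ascPochhammer ℝ n).eval b
      / ((ascPochhammer ℝ n).eval (b+1) * n.factorial) = cc n * (b / (b + n)) := by
    rw [cc]
    have := asc_ratio n b
    field_simp
    linear_combination ((ascPochhammer ℝ n).eval (1/2)) * asc_ratio n b
  push_cast [← hre]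
  ring

open Complex Filter
lemma tannery {t : ℝ} (h0 : 0 ≤ t) (h1 : t < 1) :
    Tendsto (fun b : ℝ => ∑' n : ℕ, cc n * (b / (b + n)) * t ^ n) atTop (nhds (SS t)) := by
  apply tendsto_tsum_of_dominated_convergence
    (bound := fun n => cc n * t ^ n)
    (summable_base (by rwa [_root_.abs_of_nonneg h0]))
  · intro k
    have hden : Tendsto (fun b : ℝ => b + k) atTop atTop :=
      tendsto_atTop_add_const_right _ _ tendsto_id
    have hfrac : Tendsto (fun b : ℝ => (k:ℝ) / (b + k)) atTop (nhds 0) :=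
      Tendsto.div_atTop tendsto_const_nhds hden
    have hmain : Tendsto (fun b : ℝ => b / (b + k)) atTop (nhds 1) := by
      have h2 : Tendsto (fun b : ℝ => 1 - (k:ℝ)/(b + k)) atTop (nhds 1) := by
        simpa using tendsto_const_nhds.sub hfrac
      apply h2.congr'
      filter_upwards [eventually_ge_atTop (1:ℝ)] with b hb
      have hbk : b + (k:ℝ) ≠ 0 := by positivity
      field_simp
      ring
    have := (hmain.const_mul (cc k)).mul_const (t ^ k)
    simpa using this
  · filter_upwards [eventually_ge_atTop (1:ℝ)] with b hb
    intro k
    have hb0 : (0:ℝ) < b := by linarith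
    have hbk : (0:ℝ) < b + k := by positivity
    have hfr0 : 0 ≤ b / (b + k) := by positivity
    have hfr1 : b / (b + k) ≤ 1 := by
      rw [div_le_one hbk]; linarith [Nat.cast_nonneg (α := ℝ) k]
    rw [Real.norm_eq_abs, _root_.abs_mul, _root_.abs_mul, _root_.abs_of_pos (cc_pos k),
      _root_.abs_of_nonneg hfr0, _root_.abs_of_nonneg (pow_nonneg h0 k)]
    calc cc k * (b/(b+k)) * t^k ≤ cc k * 1 * t^k := by
          apply mul_le_mul_of_nonneg_right _ (pow_nonneg h0 k)
          exact mul_le_mul_of_nonneg_left hfr1 (cc_pos k).le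
      _ = cc k * t^k := by ring

lemma b_tendsto : Tendsto (fun q : ℝ => (5 - q) / (2 * (q - 1))) (nhdsWithin 1 (Set.Ioi 1)) atTop := by
  have hnum : Tendsto (fun q : ℝ => 5 - q) (nhdsWithin 1 (Set.Ioi 1)) (nhds 4) := by
    apply Tendsto.mono_left _ nhdsWithin_le_nhds
    have : Tendsto (fun q : ℝ => 5 - q) (nhds 1) (nhds (5 - 1)) :=
      (continuous_const.sub continuous_id).tendsto 1
    norm_num at this; exact this
  have hden : Tendsto (fun q : ℝ => (2 * (q - 1))⁻¹) (nhdsWithin 1 (Set.Ioi 1)) atTop := by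
    apply Tendsto.comp tendsto_inv_nhdsGT_zero
    rw [tendsto_nhdsWithin_iff]
    constructor
    · apply Tendsto.mono_left _ nhdsWithin_le_nhds
      have : Tendsto (fun q : ℝ => 2 * (q - 1)) (nhds 1) (nhds (2 * (1 - 1))) :=
        (continuous_const.mul (continuous_id.sub continuous_const)).tendsto 1
      norm_num at this; exact this
    · filter_upwards [self_mem_nhdsWithin] with q hq
      simp only [Set.mem_Ioi] at hq ⊢
      linarith
  simpa [div_eq_mul_inv] using hnum.pos_mul_atTop (by norm_num) hden

open Complex Filter
theorem Asq_tendsto (p : ℂ) (hp : p.im ≠ 0) (ℏ : ℝ) (hℏ : 0 < ℏ) :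
    Tendsto (fun q : ℝ => Asq ℏ q p) (nhdsWithin 1 (Set.Ioi 1))
      (nhds ((ℏ / (2 * |p.im|) : ℝ) : ℂ)) := by
  have hp0 : p ≠ 0 := fun h => hp (by simp [h])
  have habs : 0 < ‖p‖ := by
    simpa using norm_pos_iff.mpr hp0
  set t : ℝ := p.re ^ 2 / ‖p‖ ^ 2 with ht_def
  have hsq : ‖p‖ ^ 2 = p.re ^ 2 + p.im ^ 2 := by
    rw [Complex.sq_norm, Complex.normSq_apply]; ring
  have him2 : 0 < p.im ^ 2 := by positivity
  have ht0 : 0 ≤ t := by positivity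
  have ht1 : t < 1 := by
    rw [ht_def, div_lt_one (by positivity)]
    rw [hsq]; linarith
  -- value of SS t
  have hSS : SS t = ‖p‖ / |p.im| := by
    have h1 := SS_sq ht0 ht1
    have h2 := SS_ge_one ht0 ht1
    have h1t : 1 - t = p.im ^ 2 / ‖p‖ ^ 2 := by
      rw [ht_def]; field_simp [hsq]; linarith
    have hK : (0:ℝ) < ‖p‖ / |p.im| := by positivity
    have hK2 : (‖p‖ / |p.im|) ^ 2 = ‖p‖ ^ 2 / p.im ^ 2 := by
      rw [div_pow, _root_.sq_abs]
    have hS2 : SS t ^ 2 = ‖p‖ ^ 2 / p.im ^ 2 := by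
      rw [h1t] at h1
      field_simp at h1 ⊢
      linarith [h1]
    nlinarith [hS2, hK2, hK, h2]
  -- the real function
  have hreal : Tendsto (fun q : ℝ => ℏ / (5 - q) * (Real.sqrt (2 * (q + 1)) / ‖p‖) *
      (∑' n : ℕ, cc n * (((5 - q) / (2 * (q - 1))) / ((5 - q) / (2 * (q - 1)) + n)) * t ^ n))
      (nhdsWithin 1 (Set.Ioi 1)) (nhds (ℏ / (2 * |p.im|))) := by
    have l1 : Tendsto (fun q : ℝ => ℏ / (5 - q)) (nhdsWithin 1 (Set.Ioi 1)) (nhds (ℏ / 4)) := by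
      apply Tendsto.mono_left _ nhdsWithin_le_nhds
      have : Tendsto (fun q : ℝ => ℏ / (5 - q)) (nhds 1) (nhds (ℏ / (5 - 1))) := by
        apply Tendsto.div tendsto_const_nhds
          ((continuous_const.sub continuous_id).tendsto 1) (by norm_num)
      norm_num at this; exact this
    have l2 : Tendsto (fun q : ℝ => Real.sqrt (2 * (q + 1)) / ‖p‖)
        (nhdsWithin 1 (Set.Ioi 1)) (nhds (2 / ‖p‖)) := by
      apply Tendsto.mono_left _ nhdsWithin_le_nhds
      have : Tendsto (fun q : ℝ => Real.sqrt (2 * (q + 1)) / ‖p‖) (nhds 1)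
          (nhds (Real.sqrt (2 * (1 + 1)) / ‖p‖)) := by
        apply Tendsto.div _ tendsto_const_nhds habs.ne'
        exact (Real.continuous_sqrt.comp (continuous_const.mul (continuous_id.add continuous_const))).tendsto 1
      have h4 : Real.sqrt (2 * ((1:ℝ) + 1)) = 2 := by
        rw [show (2 * ((1:ℝ)+1)) = 4 by norm_num, show (4:ℝ) = 2^2 by norm_num, Real.sqrt_sq (by norm_num)]
      rwa [h4] at this
    have l3 := (tannery ht0 ht1).comp b_tendsto
    have := (l1.mul l2).mul l3
    have heq : ℏ / 4 * (2 / ‖p‖) * SS t = ℏ / (2 * |p.im|) := by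
      rw [hSS]
      have him : |p.im| ≠ 0 := abs_ne_zero.mpr hp
      field_simp
      ring
    rw [heq] at this
    exact this
  -- transfer to ℂ
  have := (Complex.continuous_ofReal.tendsto _).comp hreal
  apply this.congr'
  filter_upwards [self_mem_nhdsWithin,
    eventually_nhdsWithin_of_eventually_nhds (Filter.Tendsto.eventually_lt_const (by norm_num : (1:ℝ) < 5) tendsto_id)]
    with q hq1 hq5
  simp only [Set.mem_Ioi] at hq1
  simp only [id_eq] at hq5
  have hq1' : (0:ℝ) < q - 1 := by linarith
  set b : ℝ := (5 - q) / (2 * (q - 1)) with hb_def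
  have hb : 0 < b := div_pos (by linarith) (by linarith)
  have hc : ((3 + q) / (2 * (q - 1)) : ℝ) = b + 1 := by
    rw [hb_def]; field_simp; ring
  have h12 : ((1:ℂ)/2) = (1/2 : ℂ) := rfl
  simp only [Function.comp_apply, Asq, hc]
  rw [hyp_real hb]
  simp only [← Complex.ofReal_mul]
  rfl
end

section
/- For the normalized Gamow state defined by φ_G(x) = √(2|Im(p)|/ℏ)·e^{ipx/ℏ} for x > 0 (Im(p) > 0) and 0 for x < 0, one has ⟨φ_G|(H|φ_G⟩) = p²/(2m) and (⟨φ_G|H)|φ_G⟩ = (p*)²/(2m), hence the symmetrized mean energy ⟨H⟩ = (p² + (p*)²)/(4m) = Re(p²)/(2m). -/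
open MeasureTheory Complex

lemma aux_integral_exp (b : ℝ) (hb : 0 < b) :
    ∫ x in Set.Ioi (0:ℝ), Real.exp (-b * x) = 1 / b := by
  have key := integral_Ioi_of_hasDerivAt_of_tendsto
    (f := fun x : ℝ => -Real.exp (-b * x) / b)
    (f' := fun x : ℝ => Real.exp (-b * x)) (a := 0) (m := 0)
    ?_ ?_ (exp_neg_integrableOn_Ioi 0 hb) ?_
  · rw [key]; field_simp; simp
  · exact (Continuous.continuousWithinAt (by continuity))
  · intro x _
    have h1 : HasDerivAt (fun x : ℝ => -b * x) (-b) x := by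
      simpa using (hasDerivAt_id x).const_mul (-b)
    have h2 := ((h1.exp).neg).div_const b
    convert h2 using 1
    · rfl
    · rfl
    · rw [eq_div_iff hb.ne']; ring
  · have h1 : Filter.Tendsto (fun x : ℝ => -b * x) Filter.atTop Filter.atBot :=
      Filter.tendsto_id.const_mul_atTop_of_neg (neg_neg_iff_pos.mpr hb)
    have h2 := (Real.tendsto_exp_atBot.comp h1).neg.div_const b
    simpa using h2

lemma aux_deriv (p : ℂ) (ℏ : ℝ) (hℏ : 0 < ℏ) (c : ℂ) :
    deriv (fun y : ℝ => c * Complex.exp (Complex.I * p * y / ℏ))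
      = fun y : ℝ => (c * (Complex.I * p / ℏ)) * Complex.exp (Complex.I * p * y / ℏ) := by
  funext y
  have h0 : HasDerivAt (fun y : ℝ => (y : ℂ)) 1 y := by
    simpa using (hasDerivAt_id y).ofReal_comp
  have h1 : HasDerivAt (fun y : ℝ => Complex.I * p * y / ℏ) (Complex.I * p / ℏ) y := by
    have hfun : (fun y : ℝ => Complex.I * p * y / ℏ) = fun y : ℝ => (Complex.I * p / ℏ) * (y : ℂ) := by
      funext z; ring
    rw [hfun]
    simpa using h0.const_mul (Complex.I * p / ℏ)
  have h2 := (h1.cexp).const_mul c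
  rw [h2.deriv]
  ring

theorem gamow_mean_energy (p : ℂ) (hp : 0 < p.im) (ℏ m : ℝ) (hℏ : 0 < ℏ) (hm : 0 < m) :
    (∫ x in Set.Ioi (0:ℝ),
        (starRingEnd ℂ) ((Real.sqrt (2 * |p.im| / ℏ) : ℝ) * Complex.exp (Complex.I * p * x / ℏ)) *
          (-(ℏ ^ 2 / (2 * m) : ℂ) *
            deriv (deriv (fun y : ℝ =>
              ((Real.sqrt (2 * |p.im| / ℏ) : ℝ) : ℂ) * Complex.exp (Complex.I * p * y / ℏ))) x))
      = p ^ 2 / (2 * m)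
    ∧ (∫ x in Set.Ioi (0:ℝ),
        (starRingEnd ℂ) (-(ℏ ^ 2 / (2 * m) : ℂ) *
            deriv (deriv (fun y : ℝ =>
              ((Real.sqrt (2 * |p.im| / ℏ) : ℝ) : ℂ) * Complex.exp (Complex.I * p * y / ℏ))) x) *
          (((Real.sqrt (2 * |p.im| / ℏ) : ℝ) : ℂ) * Complex.exp (Complex.I * p * x / ℏ)))
      = ((starRingEnd ℂ) p) ^ 2 / (2 * m)
    ∧ (p ^ 2 + ((starRingEnd ℂ) p) ^ 2) / (4 * m) = (((p ^ 2).re / (2 * m) : ℝ) : ℂ) := by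
  set s : ℝ := Real.sqrt (2 * |p.im| / ℏ) with hs
  set b : ℝ := 2 * p.im / ℏ with hbdef
  have hb : 0 < b := by positivity
  have hs2 : s ^ 2 = b := by
    rw [hs, Real.sq_sqrt (by positivity), abs_of_pos hp]
  have hℏ0 : (ℏ : ℂ) ≠ 0 := Complex.ofReal_ne_zero.mpr hℏ.ne'
  have hm0 : (m : ℂ) ≠ 0 := Complex.ofReal_ne_zero.mpr hm.ne'
  have hb0 : (b : ℂ) ≠ 0 := Complex.ofReal_ne_zero.mpr hb.ne'
  -- second derivative
  have hdd : deriv (deriv (fun y : ℝ => (s : ℂ) * Complex.exp (Complex.I * p * y / ℏ)))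
      = fun y : ℝ => ((s : ℂ) * (Complex.I * p / ℏ) ^ 2) * Complex.exp (Complex.I * p * y / ℏ) := by
    rw [aux_deriv p ℏ hℏ (s : ℂ), aux_deriv p ℏ hℏ ((s : ℂ) * (Complex.I * p / ℏ))]
    funext y; ring
  -- conjugate of exp times exp
  have hee : ∀ x : ℝ,
      (starRingEnd ℂ) (Complex.exp (Complex.I * p * x / ℏ)) * Complex.exp (Complex.I * p * x / ℏ)
        = ((Real.exp (-b * x) : ℝ) : ℂ) := by
    intro x
    rw [← Complex.exp_conj, ← Complex.exp_add, Complex.ofReal_exp]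
    congr 1
    have hsc : p - (starRingEnd ℂ) p = 2 * (p.im : ℂ) * Complex.I := by
      have h := Complex.sub_conj p
      push_cast at h
      exact h
    have hc : (starRingEnd ℂ) (Complex.I * ↑p * ↑x / ↑ℏ) =
        (-Complex.I) * (starRingEnd ℂ) p * x / ℏ := by
      simp [map_mul, map_div₀, Complex.conj_ofReal]
    rw [hc, hbdef]
    push_cast
    field_simp
    linear_combination (Complex.I * (x:ℂ)) * hsc +
      (2 * (x:ℂ) * (p.im:ℂ)) * Complex.I_sq
  have hsb : ((s : ℂ)) * (s : ℂ) = (b : ℂ) := by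
    rw [← Complex.ofReal_mul]; norm_cast; rw [← hs2]; ring
  -- integrand of the first integral
  have heq : ∀ x : ℝ,
      (starRingEnd ℂ) ((s : ℂ) * Complex.exp (Complex.I * p * x / ℏ)) *
        (-(ℏ ^ 2 / (2 * m) : ℂ) *
          (((s : ℂ) * (Complex.I * p / ℏ) ^ 2) * Complex.exp (Complex.I * p * x / ℏ)))
      = ((b : ℂ) * (p ^ 2 / (2 * m))) * ((Real.exp (-b * x) : ℝ) : ℂ) := by
    intro x
    rw [map_mul, Complex.conj_ofReal]
    rw [show (s:ℂ) * (starRingEnd ℂ) (Complex.exp (Complex.I * p * x / ℏ)) *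
        (-(↑ℏ ^ 2 / (2 * ↑m)) * ((s:ℂ) * (Complex.I * p / ↑ℏ) ^ 2 * Complex.exp (Complex.I * p * ↑x / ↑ℏ)))
        = (-(↑ℏ ^ 2 / (2 * ↑m)) * (Complex.I * p / ↑ℏ) ^ 2 * ((s:ℂ) * (s:ℂ))) *
          ((starRingEnd ℂ) (Complex.exp (Complex.I * p * x / ℏ)) * Complex.exp (Complex.I * p * ↑x / ↑ℏ))
        from by ring]
    rw [hsb, hee x]
    have : -(↑ℏ ^ 2 / (2 * ↑m)) * (Complex.I * p / ↑ℏ) ^ 2 = p ^ 2 / (2 * ↑m) := by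
      field_simp
      linear_combination (-p ^ 2) * Complex.I_sq
    rw [this]; ring
  -- value of the first integral
  have hInt : (∫ x in Set.Ioi (0:ℝ), ((Real.exp (-b * x) : ℝ) : ℂ)) = ((1 / b : ℝ) : ℂ) :=
    (integral_ofReal (𝕜 := ℂ) (f := fun x => Real.exp (-b * x))
      (μ := volume.restrict (Set.Ioi 0))).trans (by rw [aux_integral_exp b hb]; rfl)
  have h1 : (∫ x in Set.Ioi (0:ℝ),
      (starRingEnd ℂ) ((s : ℂ) * Complex.exp (Complex.I * p * x / ℏ)) *
        (-(ℏ ^ 2 / (2 * m) : ℂ) *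
          deriv (deriv (fun y : ℝ =>
            (s : ℂ) * Complex.exp (Complex.I * p * y / ℏ))) x))
      = p ^ 2 / (2 * m) := by
    rw [hdd]
    simp only [heq]
    rw [integral_const_mul, hInt]
    push_cast
    field_simp
  refine ⟨h1, ?_, ?_⟩
  · -- second integral is the conjugate of the first
    have hpt : ∀ x : ℝ,
        (starRingEnd ℂ) (-(ℏ ^ 2 / (2 * m) : ℂ) *
            deriv (deriv (fun y : ℝ =>
              (s : ℂ) * Complex.exp (Complex.I * p * y / ℏ))) x) *
          ((s : ℂ) * Complex.exp (Complex.I * p * x / ℏ))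
        = (starRingEnd ℂ) ((starRingEnd ℂ) ((s : ℂ) * Complex.exp (Complex.I * p * x / ℏ)) *
            (-(ℏ ^ 2 / (2 * m) : ℂ) *
              deriv (deriv (fun y : ℝ =>
                (s : ℂ) * Complex.exp (Complex.I * p * y / ℏ))) x)) := by
      intro x
      simp only [map_mul, Complex.conj_conj]
      ring
    simp only [hpt]
    rw [integral_conj, h1]
    rw [map_div₀, map_pow, map_mul, Complex.conj_ofReal, map_ofNat]
  · -- symmetrized energy
    have : ((starRingEnd ℂ) p) ^ 2 = (starRingEnd ℂ) (p ^ 2) := (map_pow _ _ _).symm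
    rw [this, Complex.add_conj]
    push_cast
    field_simp
    ring
end

section
/- For p ∈ ℂ with Im(p) > 0 and ℏ > 0, for every x ≥ 0 the q-Gamow wavefunction satisfies the dominated convergence bound: there exist q₀ ∈ (1,2) and an integrable function g on [0,∞) such that for all q ∈ (1, q₀], |[1 − i(q−1)px/(ℏ√(2(q+1)))]^{2/(1−q)}| ≤ g(x), and pointwise lim_{q→1⁺}[1 − i(q−1)px/(ℏ√(2(q+1)))]^{2/(1−q)} = e^{ipx/ℏ}. -/
open MeasureTheory Complex Filter

set_option maxHeartbeats 1000000 in
theorem qGamow_dominated_convergence (p : ℂ) (hp : 0 < p.im) (ℏ : ℝ) (hℏ : 0 < ℏ) :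
    ∃ q₀ ∈ Set.Ioo (1:ℝ) 2, ∃ g : ℝ → ℝ, IntegrableOn g (Set.Ioi 0) ∧
      (∀ q ∈ Set.Ioc (1:ℝ) q₀, ∀ x : ℝ, 0 ≤ x →
        ‖((1 - Complex.I * (q - 1) * p * x / (ℏ * Real.sqrt (2 * (q + 1))))
          ^ ((2 / (1 - q) : ℝ) : ℂ))‖ ≤ g x) ∧
      (∀ x : ℝ, 0 ≤ x →
        Tendsto (fun q : ℝ =>
            (1 - Complex.I * (q - 1) * p * x / (ℏ * Real.sqrt (2 * (q + 1))))
              ^ ((2 / (1 - q) : ℝ) : ℂ))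
          (nhdsWithin 1 (Set.Ioi 1))
          (nhds (Complex.exp (Complex.I * p * x / ℏ)))) := by
  set b : ℝ := p.im with hbdef
  have hb : 0 < b := hp
  have h6 : (0:ℝ) < Real.sqrt 6 := Real.sqrt_pos.mpr (by norm_num)
  set β : ℝ := b / (ℏ * Real.sqrt 6) with hβdef
  have hβ : 0 < β := div_pos hb (mul_pos hℏ h6)
  refine ⟨3/2, by norm_num, fun x => ((1 + β * x)^2)⁻¹, ?_, ?_, ?_⟩
  · -- integrability
    have hsplit : Set.Ioi (0:ℝ) = Set.Ioc 0 1 ∪ Set.Ioi 1 :=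
      (Set.Ioc_union_Ioi_eq_Ioi (by norm_num)).symm
    rw [hsplit]
    apply MeasureTheory.IntegrableOn.union
    · -- on (0,1]
      have hc : ContinuousOn (fun x : ℝ => ((1 + β * x)^2)⁻¹) (Set.Icc 0 1) := by
        apply ContinuousOn.inv₀
        · fun_prop
        · intro x hx
          have : 0 < 1 + β * x := by nlinarith [hx.1]
          positivity
      exact (hc.integrableOn_Icc).mono_set Set.Ioc_subset_Icc_self
    · -- on (1,∞)
      have hInt : IntegrableOn (fun x : ℝ => (β^2)⁻¹ * x ^ (-2:ℝ)) (Set.Ioi 1) :=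
        (integrableOn_Ioi_rpow_of_lt (by norm_num) one_pos).const_mul _
      apply MeasureTheory.Integrable.mono' hInt
      · apply ContinuousOn.aestronglyMeasurable _ measurableSet_Ioi
        apply ContinuousOn.inv₀
        · fun_prop
        · intro x hx
          have hx1 : (1:ℝ) < x := hx
          have : 0 < 1 + β * x := by nlinarith
          positivity
      · filter_upwards [ae_restrict_mem measurableSet_Ioi] with x hx
        have hx1 : (1:ℝ) < x := hx
        have hx0 : (0:ℝ) < x := by linarith
        have hβx : 0 < β * x := by positivity
        have h1 : 0 < 1 + β * x := by linarith
        have hnorm : ‖((1 + β * x)^2)⁻¹‖ = ((1 + β * x)^2)⁻¹ := by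
          rw [Real.norm_eq_abs]
          exact abs_of_nonneg (by positivity)
        rw [hnorm]
        have hrw : (β^2)⁻¹ * x ^ (-2:ℝ) = ((β * x)^2)⁻¹ := by
          rw [Real.rpow_neg hx0.le, show ((2:ℝ)) = ((2:ℕ):ℝ) by norm_num,
            Real.rpow_natCast]
          rw [mul_pow, mul_inv]
        rw [hrw]
        apply inv_anti₀ (by positivity)
        nlinarith
  · -- bound
    rintro q ⟨hq1, hq2⟩ x hx
    set s : ℝ := Real.sqrt (2 * (q + 1)) with hsdef
    have hspos : 0 < s := Real.sqrt_pos.mpr (by linarith)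
    have hs6 : s ≤ Real.sqrt 6 := Real.sqrt_le_sqrt (by linarith)
    have hdpos : 0 < ℏ * s := mul_pos hℏ hspos
    have htpos : 0 < q - 1 := by linarith
    have hq1ne : q - 1 ≠ 0 := htpos.ne'
    have h1q : 1 - q ≠ 0 := by intro h; linarith [h]
    set c : ℝ := (q - 1) * x / (ℏ * s) with hcdef
    have hc : 0 ≤ c := by positivity
    set m : ℝ := x * b / (ℏ * s) with hmdef
    have hm : 0 ≤ m := by positivity
    have hcm : c * p.im = (q - 1) * m := by
      rw [hcdef, hmdef, ← hbdef]; ring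
    have hbase : (1 - Complex.I * ((q:ℂ) - 1) * p * x / ((ℏ:ℂ) * (s:ℂ)))
        = 1 + (c : ℂ) * (-(Complex.I * p)) := by
      rw [hcdef]; push_cast; ring
    have hre : (1 - Complex.I * ((q:ℂ) - 1) * p * x / ((ℏ:ℂ) * (s:ℂ))).re
        = 1 + (q - 1) * m := by
      rw [hbase, ← hcm]
      simp [Complex.add_re, Complex.mul_re]
    have habs : 1 + (q - 1) * m ≤ ‖
        (1 - Complex.I * ((q:ℂ) - 1) * p * x / ((ℏ:ℂ) * (s:ℂ)))‖ := by
      rw [← hre]; exact Complex.re_le_norm _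
    have hq1m : 0 ≤ (q - 1) * m := mul_nonneg (by linarith) hm
    have hβx0 : 0 ≤ β * x := mul_nonneg hβ.le hx
    have hpos1 : (0:ℝ) < 1 + (q - 1) * m := by linarith
    have hexp_nonpos : (2 / (1 - q) : ℝ) ≤ 0 := by
      apply div_nonpos_of_nonneg_of_nonpos <;> [norm_num; linarith]
    calc ‖((1 - Complex.I * ((q:ℂ) - 1) * p * x / ((ℏ:ℂ) * (s:ℂ)))
          ^ ((2 / (1 - q) : ℝ) : ℂ))‖
        = ‖(1 - Complex.I * ((q:ℂ) - 1) * p * x / ((ℏ:ℂ) * (s:ℂ)))‖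
            ^ (2 / (1 - q) : ℝ) := Complex.norm_cpow_real _ _
      _ ≤ (1 + (q - 1) * m) ^ (2 / (1 - q) : ℝ) :=
          Real.rpow_le_rpow_of_nonpos hpos1 habs hexp_nonpos
      _ ≤ ((1 + β * x)^2)⁻¹ := by
          have he : (2 / (1 - q) : ℝ) = (q - 1)⁻¹ * (-2) := by
            rw [inv_mul_eq_div, div_eq_div_iff h1q hq1ne]; ring
          rw [he, Real.rpow_mul hpos1.le]
          have h1t : 1 ≤ (q - 1)⁻¹ := one_le_inv_iff₀.mpr ⟨htpos, by linarith⟩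
          have hber : 1 + m ≤ (1 + (q - 1) * m) ^ (q - 1)⁻¹ := by
            have hB := one_add_mul_self_le_rpow_one_add
              (s := (q - 1) * m) (by linarith) (p := (q - 1)⁻¹) h1t
            have hmm : (q - 1)⁻¹ * ((q - 1) * m) = m := by
              field_simp
            rw [hmm] at hB
            exact hB
          have hβm : β * x ≤ m := by
            rw [hβdef, hmdef, div_mul_eq_mul_div, mul_comm b x]
            exact div_le_div_of_nonneg_left (mul_nonneg hx hb.le) hdpos
              (mul_le_mul_of_nonneg_left hs6 hℏ.le)
          have hfin : ((1 + (q - 1) * m) ^ (q - 1)⁻¹) ^ (-2:ℝ) ≤ (1 + β * x) ^ (-2:ℝ) :=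
            Real.rpow_le_rpow_of_nonpos (by linarith) (by linarith) (by norm_num)
          calc ((1 + (q - 1) * m) ^ (q - 1)⁻¹) ^ (-2:ℝ) ≤ (1 + β * x) ^ (-2:ℝ) := hfin
            _ = ((1 + β * x)^2)⁻¹ := by
              rw [Real.rpow_neg (by linarith), show ((2:ℝ)) = ((2:ℕ):ℝ) by norm_num,
                Real.rpow_natCast]
  · -- pointwise limit
    intro x hx
    rcases eq_or_lt_of_le hx with hx0 | hx0
    · -- x = 0
      subst hx0
      simp only [Complex.ofReal_zero, mul_zero, zero_div, sub_zero, Complex.one_cpow,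
        zero_mul, Complex.exp_zero]
      exact tendsto_const_nhds
    · -- x > 0
      have hpne : p ≠ 0 := by
        intro h
        rw [hbdef, h] at hb
        simp at hb
      set u : ℝ → ℂ := fun q => -(Complex.I * p * x) / ((ℏ:ℂ) * ((Real.sqrt (2 * (q + 1)) : ℝ) : ℂ))
        with hudef
      set w : ℝ → ℂ := fun q => ((q:ℂ) - 1) * u q with hwdef
      have hsq : Tendsto (fun q : ℝ => Real.sqrt (2 * (q + 1))) (nhds 1) (nhds 2) := by
        have hcont : Continuous fun q : ℝ => Real.sqrt (2 * (q + 1)) := by fun_prop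
        have h := hcont.tendsto 1
        have h4 : Real.sqrt (2 * ((1:ℝ) + 1)) = 2 := by
          rw [show (2 * ((1:ℝ)+1)) = 2^2 by norm_num, Real.sqrt_sq (by norm_num)]
        rwa [h4] at h
      have hden : Tendsto (fun q : ℝ => (ℏ:ℂ) * ((Real.sqrt (2 * (q + 1)) : ℝ) : ℂ)) (nhds 1)
          (nhds ((ℏ:ℂ) * 2)) := by
        apply Tendsto.const_mul
        have h := (Complex.continuous_ofReal.tendsto 2).comp hsq
        simpa only [Function.comp_def, Complex.ofReal_ofNat] using h
      have hdenne : ((ℏ:ℂ) * 2) ≠ 0 := by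
        apply mul_ne_zero
        · simpa using hℏ.ne'
        · norm_num
      have hu : Tendsto u (nhds 1) (nhds (-(Complex.I * p * x) / ((ℏ:ℂ) * 2))) :=
        Tendsto.div tendsto_const_nhds hden hdenne
      have hw0 : Tendsto w (nhdsWithin 1 (Set.Ioi 1)) (nhds 0) := by
        have h1 : Tendsto (fun q : ℝ => ((q:ℂ) - 1)) (nhds 1) (nhds 0) := by
          have hcont : Continuous fun q : ℝ => ((q:ℂ) - 1) := by fun_prop
          have h := hcont.tendsto 1
          simpa using h
        have h := h1.mul hu
        rw [zero_mul] at h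
        exact h.mono_left nhdsWithin_le_nhds
      have hune : ∀ q : ℝ, 1 < q → u q ≠ 0 := by
        intro q hq
        apply div_ne_zero
        · simp only [ne_eq, neg_eq_zero, mul_eq_zero, Complex.I_ne_zero, false_or,
            Complex.ofReal_eq_zero]
          push_neg
          exact ⟨hpne, hx0.ne'⟩
        · apply mul_ne_zero
          · simpa using hℏ.ne'
          · simp only [ne_eq, Complex.ofReal_eq_zero]
            exact (Real.sqrt_pos.mpr (by linarith)).ne'
      have hwne : ∀ q ∈ Set.Ioi (1:ℝ), w q ≠ 0 := by
        intro q hq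
        apply mul_ne_zero
        · simp only [ne_eq, sub_eq_zero]
          intro h
          have : (q:ℝ) = 1 := by exact_mod_cast h
          exact (ne_of_gt hq) this
        · exact hune q hq
      have hw : Tendsto w (nhdsWithin 1 (Set.Ioi 1)) (nhdsWithin 0 {(0:ℂ)}ᶜ) := by
        rw [tendsto_nhdsWithin_iff]
        refine ⟨hw0, ?_⟩
        filter_upwards [self_mem_nhdsWithin] with q hq
        exact hwne q hq
      have hlog : Tendsto (fun z : ℂ => Complex.log (1 + z) / z)
          (nhdsWithin 0 {(0:ℂ)}ᶜ) (nhds 1) := by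
        have h1 : HasDerivAt (fun z : ℂ => Complex.log (1 + z)) 1 0 := by
          have hmem : (1:ℂ) ∈ Complex.slitPlane := by
            simp [Complex.slitPlane]
          have hd0 : HasDerivAt Complex.log 1⁻¹ (1 + 0) := by
            simpa using Complex.hasDerivAt_log hmem
          have h := hd0.comp_const_add 1 0
          simpa using h
        have h := hasDerivAt_iff_tendsto_slope.mp h1
        apply h.congr
        intro z
        simp [slope_def_field, Complex.log_one]
      have hquot : Tendsto (fun q : ℝ => Complex.log (1 + w q) / w q)
          (nhdsWithin 1 (Set.Ioi 1)) (nhds 1) := hlog.comp hw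
      have humono : Tendsto u (nhdsWithin 1 (Set.Ioi 1))
          (nhds (-(Complex.I * p * x) / ((ℏ:ℂ) * 2))) := hu.mono_left nhdsWithin_le_nhds
      have hmain : Tendsto (fun q : ℝ => ((2 / (1 - q) : ℝ) : ℂ) * Complex.log (1 + w q))
          (nhdsWithin 1 (Set.Ioi 1)) (nhds (Complex.I * p * x / ℏ)) := by
        have hlim : Tendsto (fun q : ℝ => (-2 : ℂ) * u q * (Complex.log (1 + w q) / w q))
            (nhdsWithin 1 (Set.Ioi 1)) (nhds (Complex.I * p * x / ℏ)) := by
          have h := (humono.const_mul (-2 : ℂ)).mul hquot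
          have heq : (-2:ℂ) * (-(Complex.I * p * x) / ((ℏ:ℂ) * 2)) * 1
              = Complex.I * p * x / ℏ := by
            have : ((ℏ:ℂ)) ≠ 0 := by simpa using hℏ.ne'
            field_simp
          rwa [heq] at h
        apply hlim.congr'
        filter_upwards [self_mem_nhdsWithin] with q hq
        have hq1 : (1:ℝ) < q := hq
        have hwq : w q ≠ 0 := hwne q hq
        have huq : u q ≠ 0 := hune q hq1
        have hqc : ((q:ℂ) - 1) ≠ 0 := by
          simp only [ne_eq, sub_eq_zero]
          intro h
          exact (ne_of_gt hq1) (by exact_mod_cast h)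
        have h1qc : ((1:ℂ) - (q:ℂ)) ≠ 0 := by
          intro h
          apply hqc
          linear_combination -h
        rw [hwdef]
        push_cast
        field_simp
        ring
      have hfinal := (Complex.continuous_exp.tendsto _).comp hmain
      apply hfinal.congr'
      filter_upwards [self_mem_nhdsWithin] with q hq
      have hq1 : (1:ℝ) < q := hq
      have hspos : 0 < Real.sqrt (2 * (q + 1)) := Real.sqrt_pos.mpr (by linarith)
      have hbase : (1 - Complex.I * ((q:ℂ) - 1) * p * x
            / ((ℏ:ℂ) * ((Real.sqrt (2 * (q + 1)) : ℝ) : ℂ)))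
          = 1 + w q := by
        rw [hwdef, hudef]
        push_cast
        ring
      have hzne : (1 + w q) ≠ 0 := by
        rw [← hbase]
        set s : ℝ := Real.sqrt (2 * (q + 1)) with hsdef
        set c2 : ℝ := (q - 1) * x / (ℏ * s) with hc2def
        have hcre : (1 - Complex.I * ((q:ℂ) - 1) * p * x / ((ℏ:ℂ) * (s:ℂ)))
            = 1 + (c2 : ℂ) * (-(Complex.I * p)) := by
          rw [hc2def]; push_cast; ring
        have hre : (1 - Complex.I * ((q:ℂ) - 1) * p * x / ((ℏ:ℂ) * (s:ℂ))).re
            = 1 + c2 * p.im := by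
          rw [hcre]
          simp [Complex.add_re, Complex.mul_re]
        intro h
        rw [h] at hre
        simp only [Complex.zero_re] at hre
        have hc0 : 0 ≤ c2 * p.im := by
          have h1 : (0:ℝ) ≤ c2 := by
            rw [hc2def]
            exact div_nonneg (mul_nonneg (by linarith) hx0.le) (mul_pos hℏ hspos).le
          exact mul_nonneg h1 hb.le
        linarith
      simp only [Function.comp]
      rw [hbase, Complex.cpow_def_of_ne_zero hzne, mul_comm]
end
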